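/- Let (x̄, ȳ, z̄) be a KKT point. Then for every η ∈ (0, 1/2), with β := η(1−η)/(1−2η), and every k ≥ 0: (φ̄_k + βσ‖r^k‖²) − (φ̄_{k+1} + βσ‖r^{k+1}‖²) ≥ [(1/(τ²σ))‖z^{k+1} − z^k‖² + ‖x^{k+1} − x^k‖²_{Σ̂_f+S+ησAA*} + ‖y^{k+1} − y^k‖²_{Σ̂_g+T+ησBB*}] − [((τ+β)/(τ²σ))‖z^{k+1} − z^k‖² + ‖x^{k+1} − x^k‖²_{Σ̂_f−(1/2)Σ_f} + ‖y^{k+1} − y^k‖²_{Σ̂_g−(1/2)Σ_g+ησBB*}]. -/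

import Mathlib

open scoped RealInnerProductSpace

set_option maxHeartbeats 1000000 in
theorem stmt7
    {X Y Z : Type*}
    [NormedAddCommGroup X] [InnerProductSpace ℝ X] [FiniteDimensional ℝ X]
    [NormedAddCommGroup Y] [InnerProductSpace ℝ Y] [FiniteDimensional ℝ Y]
    [NormedAddCommGroup Z] [InnerProductSpace ℝ Z] [FiniteDimensional ℝ Z]
    (A : Z →ₗ[ℝ] X) (Astar : X →ₗ[ℝ] Z)
    (B : Z →ₗ[ℝ] Y) (Bstar : Y →ₗ[ℝ] Z)
    (hA : ∀ (z : Z) (x : X), ⟪A z, x⟫ = ⟪z, Astar x⟫)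
    (hB : ∀ (z : Z) (y : Y), ⟪B z, y⟫ = ⟪z, Bstar y⟫)
    (c : Z) (σ τ : ℝ) (hσ : 0 < σ) (hτ : 0 < τ)
    (p : X → EReal) (q : Y → EReal)
    (hp_proper : ∃ x, p x ≠ ⊤) (hp_nebot : ∀ x, p x ≠ ⊥)
    (hq_proper : ∃ y, q y ≠ ⊤) (hq_nebot : ∀ y, q y ≠ ⊥)
    (hp_convex : ∀ (x x' : X) (t : ℝ), 0 ≤ t → t ≤ 1 →
      p (t • x + (1 - t) • x') ≤ ((t : ℝ) : EReal) * p x + (((1 - t : ℝ)) : EReal) * p x')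
    (hq_convex : ∀ (y y' : Y) (t : ℝ), 0 ≤ t → t ≤ 1 →
      q (t • y + (1 - t) • y') ≤ ((t : ℝ) : EReal) * q y + (((1 - t : ℝ)) : EReal) * q y')
    (f : X → ℝ) (g : Y → ℝ) (f' : X → X) (g' : Y → Y)
    (hf : ∀ x, HasGradientAt f (f' x) x) (hg : ∀ y, HasGradientAt g (g' y) y)
    (hfc : ConvexOn ℝ Set.univ f) (hgc : ConvexOn ℝ Set.univ g)
    (Sf Sfh S : X →ₗ[ℝ] X) (Sg Sgh T : Y →ₗ[ℝ] Y)
    (hSf_sym : ∀ u v : X, ⟪Sf u, v⟫ = ⟪u, Sf v⟫) (hSf_psd : ∀ u : X, 0 ≤ ⟪u, Sf u⟫)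
    (hSfh_sym : ∀ u v : X, ⟪Sfh u, v⟫ = ⟪u, Sfh v⟫) (hSfh_psd : ∀ u : X, 0 ≤ ⟪u, Sfh u⟫)
    (hSfh_ge : ∀ u : X, ⟪u, Sf u⟫ ≤ ⟪u, Sfh u⟫)
    (hS_sym : ∀ u v : X, ⟪S u, v⟫ = ⟪u, S v⟫)
    (hSg_sym : ∀ u v : Y, ⟪Sg u, v⟫ = ⟪u, Sg v⟫) (hSg_psd : ∀ u : Y, 0 ≤ ⟪u, Sg u⟫)
    (hSgh_sym : ∀ u v : Y, ⟪Sgh u, v⟫ = ⟪u, Sgh v⟫) (hSgh_psd : ∀ u : Y, 0 ≤ ⟪u, Sgh u⟫)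
    (hSgh_ge : ∀ u : Y, ⟪u, Sg u⟫ ≤ ⟪u, Sgh u⟫)
    (hT_sym : ∀ u v : Y, ⟪T u, v⟫ = ⟪u, T v⟫)
    (hf_low : ∀ x x' : X, f x' + ⟪x - x', f' x'⟫ + (1/2) * ⟪x - x', Sf (x - x')⟫ ≤ f x)
    (hf_up : ∀ x x' : X, f x ≤ f x' + ⟪x - x', f' x'⟫ + (1/2) * ⟪x - x', Sfh (x - x')⟫)
    (hg_low : ∀ y y' : Y, g y' + ⟪y - y', g' y'⟫ + (1/2) * ⟪y - y', Sg (y - y')⟫ ≤ g y)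
    (hg_up : ∀ y y' : Y, g y ≤ g y' + ⟪y - y', g' y'⟫ + (1/2) * ⟪y - y', Sgh (y - y')⟫)
    (xk : ℕ → X) (yk : ℕ → Y) (zk : ℕ → Z)
    (hxdom : ∀ k, p (xk k) ≠ ⊤) (hydom : ∀ k, q (yk k) ≠ ⊤)
    (hiter_x : ∀ (k : ℕ) (x : X),
      p (xk (k + 1)) + ((⟪xk (k + 1) - x, f' (xk k)
        + A (zk k + σ • (Astar (xk (k + 1)) + Bstar (yk k) - c))
        + (Sfh (xk (k + 1) - xk k) + S (xk (k + 1) - xk k))⟫ : ℝ) : EReal) ≤ p x)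
    (hiter_y : ∀ (k : ℕ) (y : Y),
      q (yk (k + 1)) + ((⟪yk (k + 1) - y, g' (yk k)
        + B (zk k + σ • (Astar (xk (k + 1)) + Bstar (yk (k + 1)) - c))
        + (Sgh (yk (k + 1) - yk k) + T (yk (k + 1) - yk k))⟫ : ℝ) : EReal) ≤ q y)
    (hiter_z : ∀ k : ℕ, zk (k + 1) = zk k + (τ * σ) • (Astar (xk (k + 1)) + Bstar (yk (k + 1)) - c))

    (xb : X) (yb : Y) (zb : Z)
    (hxb_dom : p xb ≠ ⊤) (hyb_dom : q yb ≠ ⊤)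
    (hKKT_x : ∀ x : X, p xb + ((⟪xb - x, f' xb + A zb⟫ : ℝ) : EReal) ≤ p x)
    (hKKT_y : ∀ y : Y, q yb + ((⟪yb - y, g' yb + B zb⟫ : ℝ) : EReal) ≤ q y)
    (hKKT_c : Astar xb + Bstar yb = c)
 :
    ∀ η β : ℝ, 0 < η → η < 1/2 → β = η * (1 - η) / (1 - 2 * η) → ∀ k : ℕ,
      ((1 / (τ ^ 2 * σ)) * ‖zk (k + 1) - zk k‖ ^ 2
          + ⟪(xk (k + 1) - xk k), Sfh (xk (k + 1) - xk k) + S (xk (k + 1) - xk k) + (η * σ) • A (Astar (xk (k + 1) - xk k))⟫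
          + ⟪(yk (k + 1) - yk k), Sgh (yk (k + 1) - yk k) + T (yk (k + 1) - yk k) + (η * σ) • B (Bstar (yk (k + 1) - yk k))⟫)
        - (((τ + β) / (τ ^ 2 * σ)) * ‖zk (k + 1) - zk k‖ ^ 2
          + ⟪(xk (k + 1) - xk k), Sfh (xk (k + 1) - xk k) - (1/2 : ℝ) • Sf (xk (k + 1) - xk k)⟫
          + ⟪(yk (k + 1) - yk k), Sgh (yk (k + 1) - yk k) - (1/2 : ℝ) • Sg (yk (k + 1) - yk k) + (η * σ) • B (Bstar (yk (k + 1) - yk k))⟫)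
      ≤ (((τ * σ)⁻¹ * ‖zk k - zb‖ ^ 2 + ⟪xk k - xb, Sfh (xk k - xb) + S (xk k - xb)⟫ + ⟪yk k - yb, Sgh (yk k - yb) + T (yk k - yb) + σ • B (Bstar (yk k - yb))⟫) + β * σ * ‖Astar (xk k) + Bstar (yk k) - c‖ ^ 2)
        - (((τ * σ)⁻¹ * ‖zk (k + 1) - zb‖ ^ 2 + ⟪xk (k + 1) - xb, Sfh (xk (k + 1) - xb) + S (xk (k + 1) - xb)⟫ + ⟪yk (k + 1) - yb, Sgh (yk (k + 1) - yb) + T (yk (k + 1) - yb) + σ • B (Bstar (yk (k + 1) - yb))⟫) + β * σ * ‖Astar (xk (k + 1)) + Bstar (yk (k + 1)) - c‖ ^ 2) := by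
  
  intro η β hη0 hη2 hβ k
  have hσ' : σ ≠ 0 := ne_of_gt hσ
  have hτ' : τ ≠ 0 := ne_of_gt hτ
  have hη3 : (0:ℝ) < 1 - η := by linarith
  have hη4 : (0:ℝ) < 1 - 2*η := by linarith
  -- adjoint helpers
  have hA' : ∀ (x : X) (z : Z), ⟪x, A z⟫ = ⟪Astar x, z⟫ := by
    intro x z
    rw [real_inner_comm, hA, real_inner_comm]
  have hB' : ∀ (y : Y) (z : Z), ⟪y, B z⟫ = ⟪Bstar y, z⟫ := by
    intro y z
    rw [real_inner_comm, hB, real_inner_comm]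
  -- vectors
  set dx := xk (k+1) - xk k with hdx
  set dy := yk (k+1) - yk k with hdy
  set xe := xk (k+1) - xb with hxe
  set ye := yk (k+1) - yb with hye
  set a := Astar dx with ha
  set w := Bstar dy with hw
  set u := Astar xe with hu
  set v := Bstar ye with hv
  -- commutation facts
  have cvu : ⟪v, u⟫ = ⟪u, v⟫ := real_inner_comm _ _
  have cau : ⟪a, u⟫ = ⟪u, a⟫ := real_inner_comm _ _
  have cav : ⟪a, v⟫ = ⟪v, a⟫ := real_inner_comm _ _
  have cwu : ⟪w, u⟫ = ⟪u, w⟫ := real_inner_comm _ _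
  have cwv : ⟪w, v⟫ = ⟪v, w⟫ := real_inner_comm _ _
  have cwa : ⟪w, a⟫ = ⟪a, w⟫ := real_inner_comm _ _
  have czu : ⟪zk k, u⟫ = ⟪u, zk k⟫ := real_inner_comm _ _
  have czv : ⟪zk k, v⟫ = ⟪v, zk k⟫ := real_inner_comm _ _
  have cbu : ⟪zb, u⟫ = ⟪u, zb⟫ := real_inner_comm _ _
  have cbv : ⟪zb, v⟫ = ⟪v, zb⟫ := real_inner_comm _ _
  have cbz : ⟪zb, zk k⟫ = ⟪zk k, zb⟫ := real_inner_comm _ _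
  have cSf : ⟪dx, Sf xe⟫ = ⟪xe, Sf dx⟫ := by
    rw [← hSf_sym xe dx]; exact real_inner_comm _ _
  have cSfh : ⟪dx, Sfh xe⟫ = ⟪xe, Sfh dx⟫ := by
    rw [← hSfh_sym xe dx]; exact real_inner_comm _ _
  have cS : ⟪dx, S xe⟫ = ⟪xe, S dx⟫ := by
    rw [← hS_sym xe dx]; exact real_inner_comm _ _
  have cSg : ⟪dy, Sg ye⟫ = ⟪ye, Sg dy⟫ := by
    rw [← hSg_sym ye dy]; exact real_inner_comm _ _
  have cSgh : ⟪dy, Sgh ye⟫ = ⟪ye, Sgh dy⟫ := by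
    rw [← hSgh_sym ye dy]; exact real_inner_comm _ _
  have cT : ⟪dy, T ye⟫ = ⟪ye, T dy⟫ := by
    rw [← hT_sym ye dy]; exact real_inner_comm _ _
  -- constraint-space identities
  have hAB1 : Astar (xk (k+1)) + Bstar (yk (k+1)) - c = u + v := by
    rw [hu, hv, hxe, hye, ← hKKT_c]
    simp only [map_sub]
    abel
  have hAB0 : Astar (xk (k+1)) + Bstar (yk k) - c = u + (v - w) := by
    rw [hu, hv, hw, hxe, hye, hdy, ← hKKT_c]
    simp only [map_sub]
    abel
  have hAB2 : Astar (xk k) + Bstar (yk k) - c = (u - a) + (v - w) := by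
    rw [hu, ha, hv, hw, hxe, hdx, hye, hdy, ← hKKT_c]
    simp only [map_sub]
    abel
  have hz1 : zk (k+1) = zk k + (τ*σ) • (u + v) := by
    rw [hiter_z k, hAB1]
  -- EReal material
  have getR : ∀ (P1 Pb : EReal) (s t : ℝ), P1 ≠ ⊤ → P1 ≠ ⊥ → Pb ≠ ⊤ → Pb ≠ ⊥ →
      P1 + (s:EReal) ≤ Pb → Pb + (t:EReal) ≤ P1 → s + t ≤ 0 := by
    intro P1 Pb s t h1t h1b hbt hbb hle1 hle2
    rw [← EReal.coe_toReal h1t h1b, ← EReal.coe_toReal hbt hbb] at hle1 hle2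
    rw [← EReal.coe_add, EReal.coe_le_coe_iff] at hle1 hle2
    linarith
  -- the two variational inequalities
  have hHX : ⟪xe, f' (xk k)⟫ + ⟪u, zk k⟫ + σ*(⟪u,u⟫ + ⟪u,v⟫ - ⟪u,w⟫) + ⟪xe, Sfh dx⟫
      + ⟪xe, S dx⟫ - ⟪xe, f' xb⟫ - ⟪u, zb⟫ ≤ 0 := by
    have h3 := getR _ _ _ _ (hxdom (k+1)) (hp_nebot _) hxb_dom (hp_nebot _)
      (hiter_x k xb) (hKKT_x (xk (k+1)))
    rw [hAB0, show xb - xk (k+1) = -xe from by rw [hxe]; abel, ← hdx, ← hxe] at h3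
    simp only [inner_add_right, inner_neg_left, real_inner_smul_right, inner_sub_right,
      map_neg, hA', ← hu] at h3
    linarith
  have hHY : ⟪ye, g' (yk k)⟫ + ⟪v, zk k⟫ + σ*(⟪u,v⟫ + ⟪v,v⟫) + ⟪ye, Sgh dy⟫
      + ⟪ye, T dy⟫ - ⟪ye, g' yb⟫ - ⟪v, zb⟫ ≤ 0 := by
    have h3 := getR _ _ _ _ (hydom (k+1)) (hq_nebot _) hyb_dom (hq_nebot _)
      (hiter_y k yb) (hKKT_y (yk (k+1)))
    rw [hAB1, show yb - yk (k+1) = -ye from by rw [hye]; abel, ← hdy, ← hye] at h3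
    simp only [inner_add_right, inner_neg_left, real_inner_smul_right, inner_sub_right,
      map_neg, hB', ← hv, cvu] at h3
    linarith
  -- convexity inequalities
  have hf1 : f (xk k) + (⟪dx, f' (xk k)⟫ - ⟪xe, f' (xk k)⟫)
      + (1/2)*(⟪dx, Sf dx⟫ - 2*⟪xe, Sf dx⟫ + ⟪xe, Sf xe⟫) ≤ f xb := by
    have h := hf_low xb (xk k)
    rw [show xb - xk k = dx - xe from by rw [hdx, hxe]; abel] at h
    simp only [map_sub, inner_sub_left, inner_sub_right, cSf] at h
    linarith
  have hf2 : f (xk (k+1)) ≤ f (xk k) + ⟪dx, f' (xk k)⟫ + (1/2)*⟪dx, Sfh dx⟫ := by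
    have h := hf_up (xk (k+1)) (xk k)
    rw [← hdx] at h
    linarith
  have hf3 : f xb + ⟪xe, f' xb⟫ + (1/2)*⟪xe, Sf xe⟫ ≤ f (xk (k+1)) := by
    have h := hf_low (xk (k+1)) xb
    rw [← hxe] at h
    linarith
  have hg1 : g (yk k) + (⟪dy, g' (yk k)⟫ - ⟪ye, g' (yk k)⟫)
      + (1/2)*(⟪dy, Sg dy⟫ - 2*⟪ye, Sg dy⟫ + ⟪ye, Sg ye⟫) ≤ g yb := by
    have h := hg_low yb (yk k)
    rw [show yb - yk k = dy - ye from by rw [hdy, hye]; abel] at h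
    simp only [map_sub, inner_sub_left, inner_sub_right, cSg] at h
    linarith
  have hg2 : g (yk (k+1)) ≤ g (yk k) + ⟪dy, g' (yk k)⟫ + (1/2)*⟪dy, Sgh dy⟫ := by
    have h := hg_up (yk (k+1)) (yk k)
    rw [← hdy] at h
    linarith
  have hg3 : g yb + ⟪ye, g' yb⟫ + (1/2)*⟪ye, Sg ye⟫ ≤ g (yk (k+1)) := by
    have h := hg_low (yk (k+1)) yb
    rw [← hye] at h
    linarith
  -- PSD squares
  have hPf : 0 ≤ 4*⟪xe, Sf xe⟫ - 4*⟪xe, Sf dx⟫ + ⟪dx, Sf dx⟫ := by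
    have h := hSf_psd ((2:ℝ) • xe - dx)
    simp only [map_sub, map_smul, inner_sub_left, inner_sub_right,
      real_inner_smul_left, real_inner_smul_right, cSf] at h
    linarith
  have hPg : 0 ≤ 4*⟪ye, Sg ye⟫ - 4*⟪ye, Sg dy⟫ + ⟪dy, Sg dy⟫ := by
    have h := hSg_psd ((2:ℝ) • ye - dy)
    simp only [map_sub, map_smul, inner_sub_left, inner_sub_right,
      real_inner_smul_left, real_inner_smul_right, cSg] at h
    linarith
  -- the constraint-residual block
  have hrknn : (0:ℝ) ≤ ⟪u,u⟫+⟪v,v⟫+⟪a,a⟫+⟪w,w⟫+2*⟪u,v⟫-2*⟪u,a⟫-2*⟪u,w⟫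
      -2*⟪v,a⟫-2*⟪v,w⟫+2*⟪a,w⟫ := by
    have h : (0:ℝ) ≤ ⟪u + v - a - w, u + v - a - w⟫ := real_inner_self_nonneg
    simp only [inner_add_left, inner_add_right, inner_sub_left, inner_sub_right,
      cvu, cau, cav, cwu, cwv, cwa] at h
    linarith
  have hsqnn : (0:ℝ) ≤ (1-η)^2*⟪a,a⟫ + 2*(1-η)*(⟪u,a⟫+⟪v,a⟫-⟪a,a⟫-⟪a,w⟫)
      + (⟪u,u⟫+⟪v,v⟫+⟪a,a⟫+⟪w,w⟫+2*⟪u,v⟫-2*⟪u,a⟫-2*⟪u,w⟫-2*⟪v,a⟫-2*⟪v,w⟫+2*⟪a,w⟫) := by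
    have h : (0:ℝ) ≤ ⟪(1-η) • a + (u + v - a - w), (1-η) • a + (u + v - a - w)⟫ :=
      real_inner_self_nonneg
    simp only [inner_add_left, inner_add_right, inner_sub_left, inner_sub_right,
      real_inner_smul_left, real_inner_smul_right, cvu, cau, cav, cwu, cwv, cwa] at h
    linarith
  have hco : (0:ℝ) ≤ β*(1-η) - η := by
    have h : β*(1-η) - η = η^3/(1-2*η) := by
      rw [hβ, eq_div_iff (ne_of_gt hη4), sub_mul, div_mul_eq_mul_div, div_mul_cancel₀ _ (ne_of_gt hη4)]; ring
    rw [h]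
    positivity
  have habs : ∀ Q R SQ : ℝ, 0 ≤ R → 0 ≤ SQ → (1-η)*Q = SQ + (β*(1-η)-η)*R → 0 ≤ σ*Q := by
    intro Q R SQ hR hSQ hid
    have h2 : 0 ≤ (1-η)*Q := by
      rw [hid]
      have := mul_nonneg hco hR
      linarith
    have h3 := div_nonneg h2 hη3.le
    rw [mul_div_cancel_left₀ _ (ne_of_gt hη3)] at h3
    exact mul_nonneg hσ.le h3
  have hZb : (0:ℝ) ≤ σ*((1+β)*(⟪u,u⟫+⟪v,v⟫+⟪a,a⟫+⟪w,w⟫+2*⟪u,v⟫-2*⟪u,a⟫-2*⟪u,w⟫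
      -2*⟪v,a⟫-2*⟪v,w⟫+2*⟪a,w⟫) + (1-η)*⟪a,a⟫ + 2*(⟪u,a⟫+⟪v,a⟫-⟪a,a⟫-⟪a,w⟫)) := by
    refine habs _ _ _ hrknn hsqnn (by ring)
  -- z-norm facts
  set Z0 : ℝ := ‖zk k - zb‖^2 with hZ0
  set Z1 : ℝ := ‖zk (k+1) - zb‖^2 with hZ1
  have hzdiff : (τ*σ)⁻¹*Z0 - (τ*σ)⁻¹*Z1
      = -2*(⟪u, zk k⟫ + ⟪v, zk k⟫ - ⟪u, zb⟫ - ⟪v, zb⟫) - τ*σ*(⟪u,u⟫+2*⟪u,v⟫+⟪v,v⟫) := by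
    rw [hZ0, hZ1, hz1]
    simp only [← real_inner_self_eq_norm_sq]
    simp only [inner_add_left, inner_add_right, inner_sub_left, inner_sub_right,
      real_inner_smul_left, real_inner_smul_right, cvu, czu, czv, cbu, cbv, cbz]
    field_simp
    ring
  have hdznorm : ‖zk (k+1) - zk k‖^2 = τ^2*σ^2*(⟪u,u⟫+2*⟪u,v⟫+⟪v,v⟫) := by
    rw [hz1, show zk k + (τ*σ) • (u + v) - zk k = (τ*σ) • (u + v) from by abel,
      ← real_inner_self_eq_norm_sq]
    simp only [inner_add_left, inner_add_right, real_inner_smul_left,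
      real_inner_smul_right, cvu]
    ring
  have hrk0n : ‖Astar (xk k) + Bstar (yk k) - c‖^2
      = ⟪u,u⟫+⟪v,v⟫+⟪a,a⟫+⟪w,w⟫+2*⟪u,v⟫-2*⟪u,a⟫-2*⟪u,w⟫-2*⟪v,a⟫-2*⟪v,w⟫+2*⟪a,w⟫ := by
    rw [hAB2, ← real_inner_self_eq_norm_sq]
    simp only [inner_add_left, inner_add_right, inner_sub_left, inner_sub_right,
      cvu, cau, cav, cwu, cwv, cwa]
    ring
  have hr1n : ‖Astar (xk (k+1)) + Bstar (yk (k+1)) - c‖^2 = ⟪u,u⟫+2*⟪u,v⟫+⟪v,v⟫ := by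
    rw [hAB1, ← real_inner_self_eq_norm_sq]
    simp only [inner_add_left, inner_add_right, cvu]
    ring
  -- rewrite the goal
  rw [hdznorm, hrk0n, hr1n,
    show xk k - xb = xe - dx from by rw [hxe, hdx]; abel,
    show yk k - yb = ye - dy from by rw [hye, hdy]; abel]
  simp only [inner_add_right, inner_sub_right, inner_add_left, inner_sub_left,
    real_inner_smul_right, real_inner_smul_left, map_sub, map_add, map_smul,
    hA', hB', ← ha, ← hu, ← hv, ← hw,
    cSf, cSfh, cS, cSg, cSgh, cT, cvu, cwv]
  have hq1 : 1/(τ^2*σ) * (τ^2*σ^2*(⟪u,u⟫ + 2*⟪u,v⟫ + ⟪v,v⟫))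
      = τ*σ*(⟪u,u⟫ + 2*⟪u,v⟫ + ⟪v,v⟫) / τ := by
    field_simp
  have hq1' : τ*σ*(⟪u,u⟫ + 2*⟪u,v⟫ + ⟪v,v⟫) / τ = σ*(⟪u,u⟫ + 2*⟪u,v⟫ + ⟪v,v⟫) := by
    field_simp
  have hq2 : (τ+β)/(τ^2*σ) * (τ^2*σ^2*(⟪u,u⟫ + 2*⟪u,v⟫ + ⟪v,v⟫))
      = (τ+β)*σ*(⟪u,u⟫ + 2*⟪u,v⟫ + ⟪v,v⟫) := by
    field_simp
  rw [hq1, hq1', hq2]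
  linarith [hHX, hHY, hf1, hf2, hf3, hg1, hg2, hg3, hPf, hPg, hZb, hzdiff]
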